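/- arXiv:1803.09009 — 2 statements merged into one kernel-verified Lean document; each statement's English description precedes it below -/
import Mathlib

section
/- For any two adjacent necklaces σ = a_1...a_n and τ = b_1...b_n in the colexicographic listing of binary necklaces of length n (with σ before τ), if j is the smallest index such that b_j ≠ 0 and j ≤ n, then the length-(n−j) suffixes of σ and τ are equal. -/
open List

private def pz : Fin 2 → Bool := fun a => a == 0

private lemma fin2_one {a : Fin 2} (h : a ≠ 0) : a = 1 := by
  revert h; revert a; decide

private lemma fin2_one' {a : Fin 2} (h : a ≠ 1) : a = 0 := by
  revert h; revert a; decide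

private lemma lex_zeros : ∀ (a b : ℕ), a < b → ∀ (z y : List (Fin 2)),
    replicate b (0:Fin 2) ++ z < replicate a (0:Fin 2) ++ 1 :: y := by
  intro a
  induction a with
  | zero =>
    intro b hb z y
    obtain ⟨c, rfl⟩ : ∃ c, b = c + 1 := ⟨b - 1, by omega⟩
    show Lex (· < ·) _ _
    rw [replicate_succ]
    simp only [replicate, nil_append, cons_append]
    exact Lex.rel (by decide)
  | succ a ih =>
    intro b hb z y
    obtain ⟨c, rfl⟩ : ∃ c, b = c + 1 := ⟨b - 1, by omega⟩
    show Lex (· < ·) _ _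
    rw [replicate_succ, replicate_succ]
    simp only [cons_append]
    exact Lex.cons (ih c (by omega) z y)

private lemma cons_lt_iff (a b : Fin 2) (l m : List (Fin 2)) :
    (a::l) < (b::m) ↔ a < b ∨ (a = b ∧ l < m) := by
  constructor
  · intro h
    have h' : Lex (· < ·) (a::l) (b::m) := h
    cases h' with
    | cons h => exact Or.inr ⟨rfl, h⟩
    | rel h => exact Or.inl h
  · rintro (h | ⟨rfl, h⟩)
    · exact Lex.rel h
    · exact Lex.cons h

private lemma append_lt_iff : ∀ (a b x y : List (Fin 2)), a.length = b.length →
    (a ++ x < b ++ y ↔ a < b ∨ (a = b ∧ x < y)) := by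
  intro a
  induction a with
  | nil =>
    intro b x y h
    have hb : b = [] := by cases b <;> simp_all
    subst hb
    simp only [nil_append]
    constructor
    · intro h
      exact Or.inr ⟨by trivial, h⟩
    · rintro (h | ⟨-, h⟩)
      · have h' : Lex (· < ·) ([] : List (Fin 2)) [] := h
        cases h'
      · exact h
  | cons a as ih =>
    intro b x y h
    cases b with
    | nil => simp at h
    | cons b bs =>
      simp only [cons_append]
      rw [cons_lt_iff, cons_lt_iff, ih bs x y (by simpa using h)]
      simp only [List.cons.injEq]
      tauto

private lemma tw_rep (k : ℕ) (l : List (Fin 2)) :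
    takeWhile pz (replicate k (0:Fin 2) ++ l) = replicate k 0 ++ takeWhile pz l := by
  induction k with
  | zero => simp
  | succ k ih =>
    rw [replicate_succ, cons_append, takeWhile_cons]
    simp [pz, ih]

private lemma tw_one (X : List (Fin 2)) : takeWhile pz (1 :: X) = [] := by
  rw [takeWhile_cons]; simp [pz]

private lemma struct (d : List (Fin 2)) (h1 : (1:Fin 2) ∈ d) :
    ∃ e, d = replicate ((d.takeWhile pz).length) (0:Fin 2) ++ 1 :: e := by
  have htw : d.takeWhile pz = replicate ((d.takeWhile pz).length) 0 :=
    eq_replicate_iff.2 ⟨rfl, fun b hb => by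
      have := mem_takeWhile_imp hb; simpa [pz] using this⟩
  have hdw : d.dropWhile pz ≠ [] := by
    intro hnil
    have := dropWhile_eq_nil_iff.1 hnil 1 h1
    simp [pz] at this
  have hhead : (d.dropWhile pz).head hdw = 1 := by
    have := head_dropWhile_not pz hdw
    apply fin2_one; intro h0; rw [h0] at this; simp [pz] at this
  refine ⟨(d.dropWhile pz).tail, ?_⟩
  conv_rhs => rw [← hhead, cons_head_tail, ← htw, takeWhile_append_dropWhile]

private lemma reshape (k : ℕ) (X Y : List (Fin 2)) :
    (replicate k (0:Fin 2) ++ 1 :: X) ++ Y = replicate k 0 ++ 1 :: (X ++ Y) := by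
  simp

/-- A binary necklace: lexicographically least among all its cyclic rotations. -/
def IsNecklace (w : List (Fin 2)) : Prop := ∀ r : ℕ, w ≤ w.rotate r

/-- Colexicographic strict order on equal-length strings:
compare by the largest index of disagreement. -/
def ColexLt (a b : List (Fin 2)) : Prop := a.reverse < b.reverse

theorem stmt_0 (n : ℕ) (σ τ : List (Fin 2))
    (hσlen : σ.length = n) (hτlen : τ.length = n)
    (hσ : IsNecklace σ) (hτ : IsNecklace τ)
    (hlt : ColexLt σ τ)
    (hadj : ∀ γ : List (Fin 2), γ.length = n → IsNecklace γ →
      ¬ (ColexLt σ γ ∧ ColexLt γ τ))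
    (j : ℕ) (hj1 : 1 ≤ j) (hjn : j ≤ n)
    (hjne : τ[j - 1]? ≠ some 0)
    (hjmin : ∀ i, 1 ≤ i → i < j → τ[i - 1]? = some 0) :
    σ.drop j = τ.drop j := by
  rcases eq_or_lt_of_le hjn with rfl | hjlt
  · rw [drop_eq_nil_of_le hσlen.le, drop_eq_nil_of_le hτlen.le]
  have hn0 : 0 < n := by omega
  set w := τ.drop j with hw
  have hwlen : w.length = n - j := by rw [hw, length_drop, hτlen]
  have hn1 : n - 1 < τ.length := by omega
  have hj1n : j - 1 < τ.length := by omega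
  have hrep : replicate j (0:Fin 2) = 0 :: replicate (j-1) 0 := by
    conv_lhs => rw [show j = (j-1)+1 from by omega, replicate_succ]
  have hbitj : τ[j-1]'hj1n = 1 := by
    apply fin2_one
    intro h0
    exact hjne (by rw [getElem?_eq_getElem hj1n, h0])
  have hbit : ∀ i, i < j - 1 → ∀ (h : i < τ.length), τ[i]'h = 0 := by
    intro i hi h
    have h2 := hjmin (i+1) (by omega) (by omega)
    rw [Nat.add_sub_cancel] at h2
    rw [getElem?_eq_getElem h] at h2
    exact Option.some.inj h2
  have htake : τ.take (j-1) = replicate (j-1) (0:Fin 2) := by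
    refine eq_replicate_iff.2 ⟨by simp [hτlen]; omega, ?_⟩
    intro b hb
    obtain ⟨i, hi, rfl⟩ := List.mem_iff_getElem.1 hb
    rw [List.getElem_take]
    exact hbit i (by simp at hi; omega) _
  have hτeq : τ = replicate (j-1) (0:Fin 2) ++ 1 :: w := by
    conv_lhs => rw [← take_append_drop (j-1) τ, drop_eq_getElem_cons hj1n]
    rw [htake]
    simp only [hbitj, show j - 1 + 1 = j from by omega]
    rfl
  have hτeq' : τ = (replicate (j-1) (0:Fin 2) ++ [1]) ++ w := by
    rw [hτeq]; simp
  have hAl : (replicate (j-1) (0:Fin 2) ++ [1]).length = j := by simp; omega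
  have hτlast : τ[n-1]'hn1 = 1 := by
    by_contra hne
    have h0 : τ[n-1]'hn1 = 0 := fin2_one' hne
    have hdropn1 : τ.drop (n-1) = [(0:Fin 2)] := by
      rw [drop_eq_getElem_cons hn1, h0, drop_eq_nil_of_le (by omega)]
    have htaken1 : τ.take (n-1) = (replicate (j-1) (0:Fin 2) ++ [1]) ++ take (n-1-j) w := by
      conv_lhs => rw [hτeq']
      rw [take_append, take_of_length_le (by rw [hAl]; omega), hAl]
    have e1 : τ.rotate (n-1) < τ := by
      rw [rotate_eq_drop_append_take (by omega), hdropn1, htaken1]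
      conv_rhs => rw [hτeq]
      have hsh : [(0:Fin 2)] ++ ((replicate (j-1) 0 ++ [1]) ++ take (n-1-j) w)
           = replicate j 0 ++ 1 :: take (n-1-j) w := by
        rw [hrep]; simp
      rw [hsh]
      exact lex_zeros (j-1) j (by omega) _ w
    exact absurd (hτ (n-1)) (not_le_of_gt e1)
  set γ : List (Fin 2) := replicate j 0 ++ w with hγdef
  have hγlen : γ.length = n := by rw [hγdef]; simp [hwlen]; omega
  have hγn1 : n - 1 < γ.length := by omega
  have hwlast : w[n-j-1]'(by rw [hwlen]; omega) = 1 := by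
    have h2 := getElem_drop (xs := τ) (i := j) (j := n - j - 1)
      (h := by rw [length_drop, hτlen]; omega)
    simp only [show j + (n - j - 1) = n - 1 from by omega] at h2
    exact h2.trans hτlast
  have hγlast : γ[n-1]'hγn1 = 1 := by
    have h1 : γ[n-1]'hγn1 = ((replicate j (0:Fin 2) ++ w))[n-1]'(by rw [← hγdef]; exact hγn1) := by
      simp only [hγdef]
    rw [h1, getElem_append]
    split
    · next h => exfalso; simp at h; omega
    · next h =>
      simp only [length_replicate]
      simp only [show n - 1 - j = n-j-1 from by omega]
      exact hwlast
  have h1γ : (1:Fin 2) ∈ γ := by rw [← hγlast]; exact getElem_mem _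
  obtain ⟨X, hγs⟩ := struct γ h1γ
  set L := (γ.takeWhile pz).length with hL
  have hLj : j ≤ L := by
    rw [hL, hγdef, tw_rep]; simp
  have hγneck : IsNecklace γ := by
    intro r
    rw [← rotate_mod]
    set r' := r % γ.length with hr'
    rcases Nat.eq_zero_or_pos r' with h0 | hpos
    · rw [h0, rotate_zero]
    · have hr'γ : r' < γ.length := Nat.mod_lt _ (by omega)
      have hr'n : r' < n := by omega
      apply le_of_lt
      set d := γ.drop r' with hd
      have hdl : d.length = n - r' := by rw [hd, length_drop, hγlen]
      have h1d : (1:Fin 2) ∈ d := by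
        have h2 := getElem_drop (xs := γ) (i := r') (j := n - 1 - r')
          (h := by rw [length_drop, hγlen]; omega)
        simp only [show r' + (n - 1 - r') = n - 1 from by omega] at h2
        have hh := h2.trans hγlast
        have hmem : (1:Fin 2) ∈ drop r' γ := by rw [← hh]; exact getElem_mem _
        exact hmem
      obtain ⟨e, hds⟩ := struct d h1d
      set c := (d.takeWhile pz).length with hc
      have hcL : c < L := by
        rcases le_or_gt r' L with hrL | hrL
        · have hdX : d = replicate (L - r') (0:Fin 2) ++ 1 :: X := by
            rw [hd]
            conv_lhs => rw [hγs]
            rw [drop_append_of_le_length (by simpa using hrL), drop_replicate]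
          have hcv : c = L - r' := by
            rw [hc, hdX, tw_rep, tw_one]; simp
          omega
        · by_contra hge
          push_neg at hge
          have hjc : j - 1 < c := by omega
          have hdτ : d = τ.drop r' := by
            rw [hd, hγdef, drop_append, drop_replicate,
                show j - r' = 0 from by omega]
            simp only [replicate_zero, nil_append, length_replicate]
            rw [hw, drop_drop]
            simp only [show j + (r' - j) = r' from by omega]
          have e2 : τ.rotate r' < τ := by
            rw [rotate_eq_drop_append_take (by omega : r' ≤ τ.length), ← hdτ]
            conv_lhs => rw [hds]
            conv_rhs => rw [hτeq]
            rw [reshape]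
            exact lex_zeros (j-1) c hjc _ w
          exact absurd (hτ r') (not_le_of_gt e2)
      rw [rotate_eq_drop_append_take (by omega : r' ≤ γ.length), ← hd]
      conv_rhs => rw [hds]
      conv_lhs => rw [hγs]
      rw [reshape]
      exact lex_zeros c L hcL _ _
  have hσsplit : σ.reverse = (σ.drop j).reverse ++ (σ.take j).reverse := by
    rw [← reverse_append, take_append_drop]
  have hτrev : τ.reverse = w.reverse ++ (1 :: replicate (j-1) 0) := by
    rw [hτeq, reverse_append, reverse_cons, reverse_replicate, append_assoc,
        singleton_append]
  have hγrev : γ.reverse = w.reverse ++ replicate j 0 := by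
    rw [hγdef, reverse_append, reverse_replicate]
  have hlenrev : ((σ.drop j).reverse).length = (w.reverse).length := by
    simp [hσlen, hwlen]
  have hlt' : (σ.drop j).reverse ++ (σ.take j).reverse
      < w.reverse ++ (1 :: replicate (j-1) 0) := by
    have h : σ.reverse < τ.reverse := hlt
    rw [hσsplit, hτrev] at h
    exact h
  rcases (append_lt_iff _ _ _ _ hlenrev).1 hlt' with hA | ⟨hA, -⟩
  · exfalso
    refine hadj γ hγlen hγneck ⟨?_, ?_⟩
    · show σ.reverse < γ.reverse
      rw [hσsplit, hγrev]
      exact (append_lt_iff _ _ _ _ hlenrev).2 (Or.inl hA)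
    · show γ.reverse < τ.reverse
      rw [hγrev, hτrev]
      refine (append_lt_iff _ _ _ _ rfl).2 (Or.inr ⟨rfl, ?_⟩)
      rw [hrep]
      exact List.Lex.rel (by decide)
  · exact reverse_injective hA
end

section
/- Let S_1,...,S_m be pairwise disjoint nonempty subsets of Σ_k^n with universal cycles α_1,...,α_m, let x be the first symbol of α_1, and let U = α_1α_2⋯α_m. Suppose (1) |α_1| ≥ n; (2) among all α_i, the cycle α_1 has a maximal-length prefix of consecutive x's; (3) for each 1 ≤ i < m, the pair (ext_n(α_i), ext_n(α_{i+1})) is suffix-related with respect to (x,n). Then U, viewed cyclically, is a universal cycle for S = S_1 ∪ ⋯ ∪ S_m, and the length-n suffix of U equals the length-n suffix of ext_n(α_m). -/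
/-- ext_n(w) = w^t for the smallest t with t·|w| ≥ n. -/
def ext {A : Type*} (n : ℕ) (w : List A) : List A :=
  (List.replicate ((n + w.length - 1) / w.length) w).flatten

/-- w is a universal cycle for S ⊆ Σ^n: it has length |S| and contains each
string of S exactly once as a cyclic substring of length n. -/
def IsUC {A : Type*} [DecidableEq A] (n : ℕ) (S : Finset (List A)) (w : List A) : Prop :=
  0 < w.length ∧ w.length = S.card ∧
    ∀ s ∈ S, ∃! i : ℕ, i < w.length ∧ (ext n (w.rotate i)).take n = s

/-- (σ, τ) is suffix-related with respect to (x, n): letting j be the smallest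
(1-based) index of τ with t_j ≠ x, we have j ≤ n and the length-(n-j) suffixes
of σ and τ coincide. -/
def SuffixRelated {A : Type*} (σ τ : List A) (x : A) (n : ℕ) : Prop :=
  ∃ j : ℕ, 1 ≤ j ∧ j ≤ n ∧
    τ[j - 1]? ≠ some x ∧
    (∀ i, 1 ≤ i → i < j → τ[i - 1]? = some x) ∧
    σ.drop (σ.length - (n - j)) = τ.drop (τ.length - (n - j))

namespace UC9
variable {A : Type*}


/-- takeWhile facts -/
lemma tw_len_le (p : A → Bool) (l : List A) : (l.takeWhile p).length ≤ l.length :=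
  (List.takeWhile_prefix p).length_le

lemma tw_elem [Inhabited A] (p : A → Bool) (l : List A) (i : ℕ)
    (h : i < (l.takeWhile p).length) : p (l[i]!) = true := by
  have hi : i < l.length := lt_of_lt_of_le h (tw_len_le p l)
  have h1 : (l.takeWhile p)[i] = l[i] := (List.takeWhile_prefix p).getElem h
  have h2 : (l.takeWhile p)[i] ∈ l.takeWhile p := List.getElem_mem _
  rw [getElem!_pos l i hi, ← h1]
  exact List.mem_takeWhile_imp h2

lemma tw_boundary [Inhabited A] (p : A → Bool) (l : List A)
    (h : (l.takeWhile p).length < l.length) : p (l[(l.takeWhile p).length]!) = false := by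
  induction l with
  | nil => simp at h
  | cons a t ih =>
    by_cases hpa : p a
    · have htw : (a :: t).takeWhile p = a :: t.takeWhile p := by
        simp [List.takeWhile_cons, hpa]
      rw [htw] at h ⊢
      simp only [List.length_cons] at h ⊢
      have h' : (t.takeWhile p).length < t.length := by omega
      have : (a :: t)[(t.takeWhile p).length + 1]! = t[(t.takeWhile p).length]! := by
        rw [getElem!_pos (a :: t) _ (by simp; omega), getElem!_pos t _ h']
        simp
      rw [this]
      exact ih h'
    · have htw : (a :: t).takeWhile p = [] := by
        simp [List.takeWhile_cons]
        simpa using hpa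
      rw [htw]
      simp only [List.length_nil]
      rw [getElem!_pos (a :: t) 0 (by simp)]
      simpa using hpa



def bwd [Inhabited A] (w : List A) (d : ℕ) : A := w[w.length - 1 - d % w.length]!

def win [Inhabited A] (n : ℕ) (w : List A) (p : ℕ) : List A :=
  List.ofFn (fun i : Fin n => w[(p + i.1) % w.length]!)

lemma length_flatten_replicate (c : ℕ) (w : List A) :
    ((List.replicate c w).flatten).length = c * w.length := by
  induction c with
  | zero => simp
  | succ c ih => simp [List.replicate_succ, ih]; ring

lemma getElem!_flatten_replicate [Inhabited A] (c : ℕ) (w : List A) (hw : 0 < w.length)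
    (i : ℕ) (hi : i < c * w.length) :
    ((List.replicate c w).flatten)[i]! = w[i % w.length]! := by
  induction c generalizing i with
  | zero => omega
  | succ c ih =>
    have hs : (c + 1) * w.length = c * w.length + w.length := by ring
    have hs2 : c.succ * w.length = c * w.length + w.length := Nat.succ_mul c w.length
    rw [List.replicate_succ, List.flatten_cons]
    by_cases hiw : i < w.length
    · rw [getElem!_pos (w ++ _) i (by simp [length_flatten_replicate]; omega),
        List.getElem_append, dif_pos hiw, Nat.mod_eq_of_lt hiw, getElem!_pos w i hiw]
    · have hb : i - w.length < c * w.length := by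
        have := Nat.succ_mul c w.length; omega
      rw [getElem!_pos (w ++ _) i (by simp [length_flatten_replicate]; omega),
        List.getElem_append, dif_neg hiw]
      have hmm : i % w.length = (i - w.length) % w.length := Nat.mod_eq_sub_mod (by omega)
      rw [← getElem!_pos _ _ (by rw [length_flatten_replicate]; exact hb), ih _ hb, hmm]

lemma length_ext (n : ℕ) (w : List A) :
    (ext n w).length = ((n + w.length - 1) / w.length) * w.length :=
  length_flatten_replicate _ _

lemma le_length_ext (n : ℕ) (w : List A) (hw : 0 < w.length) : n ≤ (ext n w).length := by
  rw [length_ext]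
  rcases Nat.eq_zero_or_pos n with h | h
  · omega
  · have h1 := Nat.div_add_mod (n + w.length - 1) w.length
    have h2 := Nat.mod_lt (n + w.length - 1) hw
    have h3 : w.length * ((n + w.length - 1) / w.length)
        = ((n + w.length - 1) / w.length) * w.length := Nat.mul_comm _ _
    omega

lemma getElem!_ext [Inhabited A] (n : ℕ) (w : List A) (hw : 0 < w.length)
    (i : ℕ) (hi : i < (ext n w).length) : (ext n w)[i]! = w[i % w.length]! := by
  rw [length_ext] at hi
  exact getElem!_flatten_replicate _ w hw i hi

lemma mod_rev (L : ℕ) (hL : 0 < L) : ∀ (c d : ℕ), d < c * L →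
    (c * L - 1 - d) % L = L - 1 - d % L := by
  intro c
  induction c with
  | zero => omega
  | succ c ih =>
    intro d hd
    have hs : (c + 1) * L = c * L + L := by ring
    have hs2 : c.succ * L = c * L + L := Nat.succ_mul c L
    by_cases hdL : d < L
    · have he : (c + 1) * L - 1 - d = (L - 1 - d) + c * L := by omega
      rw [he, Nat.add_mul_mod_self_right, Nat.mod_eq_of_lt (by omega),
        Nat.mod_eq_of_lt hdL]
    · have he : (c + 1) * L - 1 - d = c * L - 1 - (d - L) := by omega
      have hb : d - L < c * L := by omega
      have hmm : d % L = (d - L) % L := Nat.mod_eq_sub_mod (by omega)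
      rw [he, ih _ hb, hmm]

lemma getElem!_ext_rev [Inhabited A] (n : ℕ) (w : List A) (hw : 0 < w.length)
    (d : ℕ) (hd : d < (ext n w).length) :
    (ext n w)[(ext n w).length - 1 - d]! = bwd w d := by
  have hlen : (ext n w).length = ((n + w.length - 1) / w.length) * w.length := length_ext n w
  rw [getElem!_ext n w hw _ (by omega), hlen,
    mod_rev w.length hw _ d (hlen ▸ hd)]
  rfl

lemma bwd_period [Inhabited A] (w : List A) (d : ℕ) (h : w.length ≤ d) :
    bwd w d = bwd w (d - w.length) := by
  unfold bwd
  rw [Nat.mod_eq_sub_mod h]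

lemma win_eq [Inhabited A] (n : ℕ) (w : List A) (hw : 0 < w.length) (p : ℕ) :
    (ext n (w.rotate p)).take n = win n w p := by
  have hrl : (w.rotate p).length = w.length := List.length_rotate w p
  have hle : n ≤ (ext n (w.rotate p)).length := le_length_ext n _ (by omega)
  apply List.ext_getElem
  · simp [win]; omega
  · intro i h1 h2
    have hin : i < n := by simpa [win] using h2
    rw [List.getElem_take]
    rw [← getElem!_pos (ext n (w.rotate p)) i (by omega)]
    rw [getElem!_ext n _ (by omega) i (by omega)]
    rw [hrl]
    have him : i % w.length < w.length := Nat.mod_lt i hw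
    rw [getElem!_pos (w.rotate p) _ (by omega), List.getElem_rotate]
    simp only [win, List.getElem_ofFn]
    rw [getElem!_pos w _ (Nat.mod_lt _ hw)]
    congr 1
    rw [Nat.mod_add_mod, Nat.add_comm]



lemma flat_bound : ∀ (ws : List (List A)) (i q : ℕ) (h : i < ws.length),
    q < ws[i].length → (((ws.take i).map List.length).sum + q) < ws.flatten.length := by
  intro ws
  induction ws with
  | nil => intro i q h; simp at h
  | cons w ws ih =>
    intro i q h hq
    cases i with
    | zero =>
      simp only [List.take_zero, List.map_nil, List.sum_nil, Nat.zero_add,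
        List.flatten_cons, List.length_append]
      simp only [List.getElem_cons_zero] at hq
      omega
    | succ i =>
      simp only [List.length_cons, Nat.add_lt_add_iff_right] at h
      simp only [List.getElem_cons_succ] at hq
      have := ih i q h hq
      simp only [List.take_succ_cons, List.map_cons, List.sum_cons, List.flatten_cons,
        List.length_append]
      omega

lemma flat_get : ∀ (ws : List (List A)) (i q : ℕ) (h : i < ws.length)
    (hq : q < ws[i].length) (hb : (((ws.take i).map List.length).sum + q) < ws.flatten.length),
    ws.flatten[((ws.take i).map List.length).sum + q]'hb = ws[i][q] := by
  intro ws
  induction ws with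
  | nil => intro i q h; simp at h
  | cons w ws ih =>
    intro i q h hq hb
    cases i with
    | zero =>
      simp only [List.take_zero, List.map_nil, List.sum_nil, Nat.zero_add] at hb ⊢
      simp only [List.getElem_cons_zero] at hq ⊢
      simp only [List.flatten_cons]
      rw [List.getElem_append, dif_pos hq]
    | succ i =>
      simp only [List.length_cons, Nat.add_lt_add_iff_right] at h
      simp only [List.getElem_cons_succ] at hq ⊢
      simp only [List.take_succ_cons, List.map_cons, List.sum_cons] at hb ⊢
      have hb' : ((ws.take i).map List.length).sum + q < ws.flatten.length :=
        flat_bound ws i q h hq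
      have : w.length + (((ws.take i).map List.length).sum + q)
          = w.length + ((ws.take i).map List.length).sum + q := by omega
      simp only [List.flatten_cons]
      rw [List.getElem_append, dif_neg (by omega)]
      have h2 : w.length + ((ws.take i).map List.length).sum + q - w.length
          = ((ws.take i).map List.length).sum + q := by omega
      simp_rw [h2]
      exact ih i q h hq hb'



def offs (α : ℕ → List A) (i : ℕ) : ℕ := ((List.range i).map (fun t => (α t).length)).sum

@[simp] lemma offs_zero (α : ℕ → List A) : offs α 0 = 0 := by simp [offs]

lemma offs_succ (α : ℕ → List A) (i : ℕ) : offs α (i + 1) = offs α i + (α i).length := by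
  simp [offs, List.range_succ]

lemma offs_mono (α : ℕ → List A) {i j : ℕ} (h : i ≤ j) : offs α i ≤ offs α j := by
  induction j, h using Nat.le_induction with
  | base => exact le_refl _
  | succ j hij ih => rw [offs_succ]; omega

lemma length_U (α : ℕ → List A) (m : ℕ) :
    (((List.range m).map α).flatten).length = offs α m := by
  rw [List.length_flatten, List.map_map, offs]
  rfl

lemma U_get [Inhabited A] (α : ℕ → List A) (m i q : ℕ) (him : i < m)
    (hq : q < (α i).length) :
    (((List.range m).map α).flatten)[offs α i + q]! = (α i)[q]! := by
  set ws := (List.range m).map α with hws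
  have hwl : ws.length = m := by simp [hws]
  have hi' : i < ws.length := by omega
  have hwsi : ws[i] = α i := by simp [hws]
  have htake : (ws.take i).map List.length = (List.range i).map (fun t => (α t).length) := by
    rw [hws, ← List.map_take, List.take_range, List.map_map]
    have : min i m = i := by omega
    rw [this]
    rfl
  have hq' : q < ws[i].length := by rw [hwsi]; exact hq
  have hb : ((ws.take i).map List.length).sum + q < ws.flatten.length :=
    flat_bound ws i q hi' hq'
  have hoffs : offs α i + q = ((ws.take i).map List.length).sum + q := by
    rw [htake]; rfl
  rw [hoffs, getElem!_pos ws.flatten (((ws.take i).map List.length).sum + q) hb,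
    flat_get ws i q hi' hq' hb, getElem!_pos (α i) q hq]
  simp [hws]


section core
variable [Inhabited A]

lemma chain (α : ℕ → List A) (n m : ℕ) (rr : ℕ → ℕ)
    (hlink : ∀ i, 1 ≤ i → i < m → ∀ d, d + rr i + 2 ≤ n → bwd (α (i-1)) d = bwd (α i) d)
    (Q : ℕ) :
    ∀ j l, j ≤ l → l < m → (∀ l', j < l' → l' ≤ l → rr l' ≤ Q) →
      ∀ d, d + Q + 2 ≤ n → bwd (α j) d = bwd (α l) d := by
  intro j l hjl
  induction l, hjl using Nat.le_induction with
  | base => intro _ _ d _; rfl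
  | succ l hjl ih =>
    intro hlm hr d hd
    have h1 : bwd (α j) d = bwd (α l) d :=
      ih (by omega) (fun l' a b => hr l' a (by omega)) d hd
    rw [h1]
    have h2 := hlink (l+1) (by omega) hlm d
      (by have := hr (l+1) (by omega) (le_refl _); omega)
    simpa using h2

lemma boundary (α : ℕ → List A) (n m : ℕ) (rr : ℕ → ℕ)
    (hL : ∀ i < m, 0 < (α i).length) (h1 : n ≤ (α 0).length)
    (hrL : ∀ i, 1 ≤ i → i < m → rr i < (α i).length)
    (hlink : ∀ i, 1 ≤ i → i < m → ∀ d, d + rr i + 2 ≤ n → bwd (α (i-1)) d = bwd (α i) d) :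
    ∀ i, 1 ≤ i → i ≤ m → ∀ d, d < n →
      (((List.range m).map α).flatten)[offs α i - 1 - d]! = bwd (α (i-1)) d := by
  intro i hi1
  induction i, hi1 using Nat.le_induction with
  | base =>
    intro hm d hd
    have hL0 : 0 < (α 0).length := hL 0 (by omega)
    have ho1 : offs α 1 = (α 0).length := by rw [offs_succ, offs_zero, Nat.zero_add]
    have hg := U_get α m 0 ((α 0).length - 1 - d) (by omega) (by omega)
    rw [offs_zero, Nat.zero_add] at hg
    rw [ho1, hg]
    simp only [Nat.sub_self, bwd]
    rw [Nat.mod_eq_of_lt (by omega)]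
  | succ i hi1 ih =>
    intro him d hd
    have him' : i < m := by omega
    have hLi : 0 < (α i).length := hL i him'
    have hos := offs_succ α i
    have ho1 : offs α 1 = (α 0).length := by rw [offs_succ, offs_zero, Nat.zero_add]
    have hoffs1 : (α 0).length ≤ offs α i := by
      have := offs_mono α (show 1 ≤ i from hi1); omega
    by_cases hdL : d < (α i).length
    · have hidx : offs α (i+1) - 1 - d = offs α i + ((α i).length - 1 - d) := by omega
      rw [hidx, U_get α m i _ him' (by omega)]
      simp only [Nat.add_sub_cancel, bwd]
      rw [Nat.mod_eq_of_lt (by omega)]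
    · have hd' : d - (α i).length < n := by omega
      have hri := hrL i hi1 him'
      have hidx : offs α (i+1) - 1 - d = offs α i - 1 - (d - (α i).length) := by omega
      rw [hidx, ih (by omega) _ hd']
      have hlk := hlink i hi1 him' (d - (α i).length) (by omega)
      simp only [Nat.add_sub_cancel]
      rw [hlk]
      exact (bwd_period (α i) d (by omega)).symm

lemma surj (α : ℕ → List A) (n m : ℕ) (rr : ℕ → ℕ) (x : A)
    (hm : 1 ≤ m)
    (hL : ∀ i < m, 0 < (α i).length)
    (h1 : n ≤ (α 0).length)
    (hrr0 : ∀ i < m, rr i ≤ rr 0)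
    (hrunx : ∀ i < m, ∀ l, l < rr i → (α i)[l]! = x)
    (hrrL : ∀ i < m, rr i ≤ (α i).length)
    (hrL : ∀ i, 1 ≤ i → i < m → rr i < (α i).length)
    (hlink : ∀ i, 1 ≤ i → i < m → ∀ d, d + rr i + 2 ≤ n → bwd (α (i-1)) d = bwd (α i) d) :
    ∀ j, j < m → ∀ q, q < (α j).length →
      ∃ p, p < offs α m ∧ ∀ ii, ii < n →
        (((List.range m).map α).flatten)[(p + ii) % offs α m]!
          = (α j)[(q + ii) % (α j).length]! := by
  intro j hj q hq
  have ho1 : offs α 1 = (α 0).length := by rw [offs_succ, offs_zero, Nat.zero_add]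
  have hL0 : 0 < (α 0).length := hL 0 (by omega)
  have hmono1 := offs_mono α (show 1 ≤ m from hm)
  have hNn : n ≤ offs α m := by omega
  have hNpos : 0 < offs α m := by omega
  by_cases hcase : q + n ≤ (α j).length
  · refine ⟨offs α j + q, ?_, ?_⟩
    · have h2 := offs_succ α j
      have h3 := offs_mono α (show j + 1 ≤ m by omega)
      omega
    · intro ii hii
      have h2 := offs_succ α j
      have h3 := offs_mono α (show j + 1 ≤ m by omega)
      have hlt : offs α j + (q + ii) < offs α m := by omega
      rw [Nat.add_assoc, Nat.mod_eq_of_lt hlt, U_get α m j (q+ii) hj (by omega),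
        Nat.mod_eq_of_lt (by omega)]
  · push_neg at hcase
    have hn2 : 2 ≤ n := by omega
    obtain ⟨e, he⟩ : ∃ e, e = q + n - 1 := ⟨_, rfl⟩
    have heL : (α j).length ≤ e := by omega
    obtain ⟨qe, hqe⟩ : ∃ qe, qe = e % (α j).length := ⟨_, rfl⟩
    have hqeLj : qe < (α j).length := by rw [hqe]; exact Nat.mod_lt _ (by omega)
    have hdiv : (α j).length * (e / (α j).length) + qe = e := by
      rw [hqe]; exact Nat.div_add_mod e _
    obtain ⟨P, hP⟩ : ∃ P, P = (α j).length * (e / (α j).length) := ⟨_, rfl⟩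
    rw [← hP] at hdiv
    have hP1 : (α j).length ≤ P := by
      rw [hP]
      calc (α j).length = (α j).length * 1 := (Nat.mul_one _).symm
        _ ≤ (α j).length * (e / (α j).length) :=
          Nat.mul_le_mul_left _ ((Nat.one_le_div_iff (by omega)).mpr heL)
    obtain ⟨B, hBdef⟩ : ∃ B, B = e - qe := ⟨_, rfl⟩
    have hBq : q + 1 ≤ B := by omega
    obtain ⟨back, hback⟩ : ∃ b, b = n - 1 - qe := ⟨_, rfl⟩
    have hback1 : 1 ≤ back := by omega
    have hbackn : back ≤ n - 1 := by omega
    have hbackB : back = B - q := by omega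
    have place : ∀ i', i' < m → qe < (α i').length →
        (∀ l, l ≤ qe → (α i')[l]! = (α j)[l]!) →
        (∀ d, d < back → bwd (α ((if i' = 0 then m else i') - 1)) d = bwd (α j) d) →
        ∃ p, p < offs α m ∧ ∀ ii, ii < n →
          (((List.range m).map α).flatten)[(p + ii) % offs α m]!
            = (α j)[(q + ii) % (α j).length]! := by
      intro i' him hqeL' hfwd hbwd
      have hoffi'N : offs α i' + (α i').length ≤ offs α m := by
        have h2 := offs_succ α i'
        have h3 := offs_mono α (show i' + 1 ≤ m by omega)
        omega
      refine ⟨(offs α i' + offs α m - back) % offs α m, Nat.mod_lt _ (by omega), ?_⟩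
      intro ii hii
      rw [Nat.mod_add_mod]
      by_cases hif : back ≤ ii
      · have hiiqe : ii - back ≤ qe := by omega
        have hlt : offs α i' + (ii - back) < offs α m := by omega
        have hidx : offs α i' + offs α m - back + ii = (offs α i' + (ii - back)) + offs α m := by
          omega
        rw [hidx, Nat.add_mod_right, Nat.mod_eq_of_lt hlt, U_get α m i' _ him (by omega)]
        have hrhs : (q + ii) % (α j).length = ii - back := by
          have hqii : q + ii = P + (ii - back) := by omega
          rw [hqii, hP, Nat.mul_add_mod, Nat.mod_eq_of_lt (by omega)]
        rw [hrhs]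
        exact hfwd (ii - back) hiiqe
      · push_neg at hif
        obtain ⟨d, hd⟩ : ∃ d, d = back - 1 - ii := ⟨_, rfl⟩
        have hdn : d < n := by omega
        have hdback : d < back := by omega
        have hmain : (((List.range m).map α).flatten)[(offs α i' + offs α m - back + ii)
            % offs α m]! = bwd (α j) d := by
          by_cases h0 : i' = 0
          · have hix : offs α i' + offs α m - back + ii = offs α m - 1 - d := by
              rw [h0, offs_zero]; omega
            rw [hix, Nat.mod_eq_of_lt (by omega),
              boundary α n m rr hL h1 hrL hlink m (by omega) (le_refl m) d hdn]
            have := hbwd d hdback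
            rw [if_pos h0] at this
            exact this
          · have hoffsi'n : n ≤ offs α i' := by
              have := offs_mono α (show 1 ≤ i' by omega); omega
            have hix : offs α i' + offs α m - back + ii
                = (offs α i' - 1 - d) + offs α m := by omega
            have hlt2 : offs α i' - 1 - d < offs α m := by omega
            rw [hix, Nat.add_mod_right, Nat.mod_eq_of_lt hlt2,
              boundary α n m rr hL h1 hrL hlink i' (by omega) (by omega) d hdn]
            have := hbwd d hdback
            rw [if_neg h0] at this
            exact this
        rw [hmain]
        have hqii : q + ii = B - 1 - d := by omega
        rw [hqii]
        have hBc : B = (e / (α j).length) * (α j).length := by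
          rw [show B = P by omega, hP, Nat.mul_comm]
        rw [hBc, mod_rev (α j).length (by omega) (e / (α j).length) d
          (by rw [← hBc]; omega)]
        rfl
    by_cases h2a : rr j ≤ qe
    · apply place j hj hqeLj (fun l _ => rfl)
      intro d hdback
      by_cases hj0 : j = 0
      · rw [hj0]
        simp only [if_pos rfl]
        have := chain α n m rr hlink qe 0 (m-1) (by omega) (by omega)
          (fun l' hl1 hl2 => le_trans (hrr0 l' (by omega)) (hj0 ▸ h2a)) d (by omega)
        exact hj0 ▸ this.symm
      · simp only [if_neg hj0]
        exact hlink j (by omega) hj d (by omega)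
    · push_neg at h2a
      classical
      by_cases hex : ∃ l, j < l ∧ l < m ∧ qe < rr l
      · obtain ⟨hji', hi'm, hqer⟩ := Nat.find_spec hex
        apply place (Nat.find hex) hi'm (lt_of_lt_of_le hqer (hrrL _ hi'm))
        · intro l hl
          rw [hrunx (Nat.find hex) hi'm l (by omega), hrunx j hj l (by omega)]
        · intro d hdback
          have hne0 : ¬ (Nat.find hex = 0) := by omega
          simp only [if_neg hne0]
          have := chain α n m rr hlink qe j (Nat.find hex - 1) (by omega) (by omega)
            (fun l' hl1 hl2 => by
              by_contra hcon
              push_neg at hcon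
              exact (Nat.find_min hex (show l' < Nat.find hex by omega)) ⟨hl1, by omega, hcon⟩)
            d (by omega)
          exact this.symm
      · push_neg at hex
        have hqer0 : qe < rr 0 := lt_of_lt_of_le h2a (hrr0 j hj)
        apply place 0 (by omega) (lt_of_lt_of_le hqer0 (hrrL 0 (by omega)))
        · intro l hl
          rw [hrunx 0 (by omega) l (by omega), hrunx j hj l (by omega)]
        · intro d hdback
          simp only [if_pos rfl]
          have := chain α n m rr hlink qe j (m-1) (by omega) (by omega)
            (fun l' hl1 hl2 => hex l' hl1 (by omega)) d (by omega)
          exact this.symm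

lemma getElem!_drop' (l : List A) (a i : ℕ) (h : a + i < l.length) :
    (l.drop a)[i]! = l[a + i]! := by
  rw [getElem!_pos (l.drop a) i (by rw [List.length_drop]; omega),
    getElem!_pos l (a + i) h]
  exact List.getElem_drop

lemma translate [DecidableEq A] (n : ℕ) (x : A) (σ τ : List A)
    (hσ : 0 < σ.length) (hτ : 0 < τ.length)
    (h : SuffixRelated (ext n σ) (ext n τ) x n) :
    ((τ.takeWhile (· = x)).length < τ.length) ∧
    (∀ d, d + (τ.takeWhile (· = x)).length + 2 ≤ n → bwd σ d = bwd τ d) := by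
  obtain ⟨t, ht1, htn, hne, hxs, hdrop⟩ := h
  have hτlen : n ≤ (ext n τ).length := le_length_ext n τ hτ
  have hσlen : n ≤ (ext n σ).length := le_length_ext n σ hσ
  have htlt : t - 1 < (ext n τ).length := by omega
  have hnex : (ext n τ)[t-1]! ≠ x := by
    intro hcon
    apply hne
    rw [List.getElem?_eq_getElem htlt, ← getElem!_pos (ext n τ) (t-1) htlt, hcon]
  have hxs' : ∀ l, l < t - 1 → (ext n τ)[l]! = x := by
    intro l hl
    have hx2 := hxs (l+1) (by omega) (by omega)
    simp only [Nat.add_sub_cancel] at hx2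
    rw [List.getElem?_eq_getElem (by omega)] at hx2
    rw [getElem!_pos (ext n τ) l (show l < (ext n τ).length by omega)]
    exact Option.some.inj hx2
  have hrτ : (τ.takeWhile (· = x)).length ≤ τ.length := tw_len_le _ _
  have hext_get : ∀ l, l < (ext n τ).length → (ext n τ)[l]! = τ[l % τ.length]! :=
    getElem!_ext n τ hτ
  have hstep1 : (τ.takeWhile (· = x)).length < τ.length := by
    by_contra hcon
    push_neg at hcon
    have hall : ∀ l, l < τ.length → τ[l]! = x := by
      intro l hl
      have hx3 := tw_elem (· = x) τ l (by omega)
      simpa using hx3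
    apply hnex
    rw [hext_get (t-1) htlt]
    exact hall _ (Nat.mod_lt _ hτ)
  have hb := tw_boundary (· = x) τ hstep1
  have hbne : τ[(τ.takeWhile (· = x)).length]! ≠ x := by simpa using hb
  have hstep2 : (τ.takeWhile (· = x)).length = t - 1 := by
    rcases Nat.lt_trichotomy ((τ.takeWhile (· = x)).length) (t-1) with h' | h' | h'
    · exfalso
      apply hbne
      have hx4 := hxs' _ h'
      rw [hext_get _ (by omega), Nat.mod_eq_of_lt (by omega)] at hx4
      exact hx4
    · exact h'
    · exfalso
      apply hnex
      rw [hext_get (t-1) htlt, Nat.mod_eq_of_lt (by omega)]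
      have hx5 := tw_elem (· = x) τ (t-1) (by omega)
      simpa using hx5
  refine ⟨hstep1, ?_⟩
  intro d hd
  rw [hstep2] at hd
  have hdn : d < n - t := by omega
  have h1 := congrArg (fun l => l[n - t - 1 - d]!) hdrop
  rw [getElem!_drop' _ _ _ (by omega), getElem!_drop' _ _ _ (by omega)] at h1
  rw [show (ext n σ).length - (n - t) + (n - t - 1 - d) = (ext n σ).length - 1 - d by omega,
    show (ext n τ).length - (n - t) + (n - t - 1 - d) = (ext n τ).length - 1 - d by omega] at h1
  rw [getElem!_ext_rev n σ hσ d (by omega), getElem!_ext_rev n τ hτ d (by omega)] at h1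
  exact h1

end core

end UC9

theorem stmt_9 (k n m : ℕ) (hm : 1 ≤ m)
    (S : ℕ → Finset (List (Fin k))) (α : ℕ → List (Fin k))
    (hsub : ∀ i < m, ∀ s ∈ S i, s.length = n)
    (hne : ∀ i < m, (S i).Nonempty)
    (hdisj : ∀ i < m, ∀ j < m, i ≠ j → Disjoint (S i) (S j))
    (huc : ∀ i < m, IsUC n (S i) (α i))
    (x : Fin k) (hx : (α 0)[0]? = some x)
    (h1 : n ≤ (α 0).length)
    (h2 : ∀ i < m, ((α i).takeWhile (· = x)).length ≤ ((α 0).takeWhile (· = x)).length)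
    (h3 : ∀ i, i + 1 < m → SuffixRelated (ext n (α i)) (ext n (α (i + 1))) x n) :
    IsUC n ((Finset.range m).biUnion S) (((List.range m).map α).flatten) ∧
      (((List.range m).map α).flatten).drop ((((List.range m).map α).flatten).length - n) =
        (ext n (α (m - 1))).drop ((ext n (α (m - 1))).length - n) := by
  classical
  haveI : Inhabited (Fin k) := ⟨x⟩
  have hL : ∀ i < m, 0 < (α i).length := fun i hi => (huc i hi).1
  have hlen : ∀ i, i < m → (α i).length = (S i).card := fun i hi => (huc i hi).2.1
  have hrunx : ∀ i < m, ∀ l, l < ((α i).takeWhile (· = x)).length → (α i)[l]! = x := by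
    intro i _ l hl
    have := UC9.tw_elem (· = x) (α i) l hl
    simpa using this
  have hrrL : ∀ i < m, ((α i).takeWhile (· = x)).length ≤ (α i).length :=
    fun i _ => UC9.tw_len_le _ _
  have htrans : ∀ i, 1 ≤ i → i < m →
      (((α i).takeWhile (· = x)).length < (α i).length) ∧
      (∀ d, d + ((α i).takeWhile (· = x)).length + 2 ≤ n →
        UC9.bwd (α (i-1)) d = UC9.bwd (α i) d) := by
    intro i h1i him
    have h3' := h3 (i-1) (by omega)
    rw [show i - 1 + 1 = i by omega] at h3'
    exact UC9.translate n x (α (i-1)) (α i) (hL _ (by omega)) (hL _ him) h3'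
  have hrL : ∀ i, 1 ≤ i → i < m → ((α i).takeWhile (· = x)).length < (α i).length :=
    fun i h1i him => (htrans i h1i him).1
  have hlink : ∀ i, 1 ≤ i → i < m → ∀ d, d + ((α i).takeWhile (· = x)).length + 2 ≤ n →
      UC9.bwd (α (i-1)) d = UC9.bwd (α i) d :=
    fun i h1i him => (htrans i h1i him).2
  have hNU : (((List.range m).map α).flatten).length = UC9.offs α m := UC9.length_U α m
  have ho1 : UC9.offs α 1 = (α 0).length := by
    rw [UC9.offs_succ, UC9.offs_zero, Nat.zero_add]
  have hmono1 := UC9.offs_mono α (show 1 ≤ m from hm)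
  have hL0 : 0 < (α 0).length := hL 0 (by omega)
  have hnN : n ≤ UC9.offs α m := by omega
  have hNpos : 0 < UC9.offs α m := by omega
  have hoffsum : ∀ M : ℕ, UC9.offs α M = ∑ i ∈ Finset.range M, (α i).length := by
    intro M
    induction M with
    | zero => simp
    | succ M ih => rw [UC9.offs_succ, Finset.sum_range_succ, ih]
  have hcard : UC9.offs α m = ((Finset.range m).biUnion S).card := by
    rw [Finset.card_biUnion (fun i hi j hj hij =>
      hdisj i (Finset.mem_range.mp hi) j (Finset.mem_range.mp hj) hij), hoffsum]
    exact Finset.sum_congr rfl (fun i hi => hlen i (Finset.mem_range.mp hi))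
  have hsurj : ∀ s ∈ (Finset.range m).biUnion S,
      ∃ p, p < (((List.range m).map α).flatten).length ∧
        (ext n ((((List.range m).map α).flatten).rotate p)).take n = s := by
    intro s hs
    obtain ⟨j, hjmem, hsj⟩ := Finset.mem_biUnion.mp hs
    have hjm := Finset.mem_range.mp hjmem
    obtain ⟨q, ⟨hqlt, hqwin⟩, -⟩ := (huc j hjm).2.2 s hsj
    obtain ⟨p, hpN, hpw⟩ := UC9.surj α n m
      (fun i => ((α i).takeWhile (· = x)).length) x hm hL h1 h2 hrunx hrrL hrL hlink j hjm q hqlt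
    refine ⟨p, by omega, ?_⟩
    rw [UC9.win_eq n _ (by omega) p, ← hqwin, UC9.win_eq n (α j) (hL j hjm) q]
    unfold UC9.win
    congr 1
    funext i
    have hw := hpw i.1 i.2
    rw [hNU]
    exact hw
  constructor
  · refine ⟨by omega, by rw [hNU, hcard], ?_⟩
    intro s hs
    have hsub2 : (Finset.range m).biUnion S ⊆
        (Finset.range (((List.range m).map α).flatten).length).image
          (fun p => (ext n ((((List.range m).map α).flatten).rotate p)).take n) := by
      intro s' hs'
      obtain ⟨p, hp1, hp2⟩ := hsurj s' hs'
      exact Finset.mem_image.mpr ⟨p, Finset.mem_range.mpr hp1, hp2⟩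
    have hcard2 : ((Finset.range m).biUnion S).card = (((List.range m).map α).flatten).length := by
      omega
    have heq : (Finset.range m).biUnion S =
        (Finset.range (((List.range m).map α).flatten).length).image
          (fun p => (ext n ((((List.range m).map α).flatten).rotate p)).take n) := by
      apply Finset.eq_of_subset_of_card_le hsub2
      calc ((Finset.range (((List.range m).map α).flatten).length).image _).card
          ≤ (Finset.range (((List.range m).map α).flatten).length).card :=
            Finset.card_image_le
        _ = (((List.range m).map α).flatten).length := Finset.card_range _
        _ = ((Finset.range m).biUnion S).card := hcard2.symm
    have hinj : Set.InjOn (fun p => (ext n ((((List.range m).map α).flatten).rotate p)).take n)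
        (Finset.range (((List.range m).map α).flatten).length) :=
      Finset.card_image_iff.mp (by rw [← heq, hcard2, Finset.card_range])
    obtain ⟨p, hp1, hp2⟩ := hsurj s hs
    refine ⟨p, ⟨hp1, hp2⟩, ?_⟩
    rintro y ⟨hy1, hy2⟩
    exact hinj (by simpa using hy1) (by simpa using hp1) (hy2.trans hp2.symm)
  · have hm1 : m - 1 < m := by omega
    have hLm1 : 0 < (α (m-1)).length := hL _ hm1
    have hElen : n ≤ (ext n (α (m-1))).length := UC9.le_length_ext n _ hLm1
    have hnN' : n ≤ (((List.range m).map α).flatten).length := by omega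
    apply List.ext_getElem
    · simp only [List.length_drop]
      omega
    · intro i hi1 hi2
      have hin : i < n := by
        simp only [List.length_drop] at hi1
        omega
      rw [List.getElem_drop, List.getElem_drop]
      rw [← getElem!_pos (((List.range m).map α).flatten) _ (by omega),
        ← getElem!_pos (ext n (α (m-1))) _ (by omega)]
      rw [show (((List.range m).map α).flatten).length - n + i
          = UC9.offs α m - 1 - (n - 1 - i) by omega,
        show (ext n (α (m-1))).length - n + i
          = (ext n (α (m-1))).length - 1 - (n - 1 - i) by omega]
      rw [UC9.boundary α n m (fun i => ((α i).takeWhile (· = x)).length) hL h1 hrL hlink m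
        (by omega) (le_refl m) (n-1-i) (by omega)]
      exact (UC9.getElem!_ext_rev n (α (m-1)) hLm1 (n-1-i) (by omega)).symm
end
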